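/- Let V₁,…,V_d : ℝ^n → ℝ^n be C¹ vector fields, w : [0,T] → ℝ^d a C¹ driving path, X : [0,T] → ℝ^n the solution of X' = Σ_α V_α(X) (w^α)', and Φ : [0,T] → GL(n,ℝ) the Jacobian flow solving Φ' = Σ_α DV_α(X) Φ (w^α)' with Φ₀ = Id. Then for any C¹ vector field W : ℝ^n → ℝ^n, the pull-back t ↦ Φ_t^{-1} W(X_t) satisfies Φ_t^{-1} W(X_t) = W(X₀) + ∫₀^t Φ_s^{-1} [V_α, W](X_s) (w^α)'(s) ds, where [V,W] = DW·V − DV·W is the Lie bracket. -/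

import Mathlib

open MeasureTheory intervalIntegral

/-- Pull-back of a vector field by the Jacobian flow of a driven ODE: if
`X' = Σ_α V_α(X)(w^α)'`, `Φ` solves the linearised equation
`Φ' = Σ_α (w^α)' DV_α(X) ∘ Φ` with `Φ₀ = Id`, and `Ψ_t = Φ_t^{-1}`, then for
every `C¹` vector field `W` and `t ∈ [0,T]`,
`Φ_t^{-1} W(X_t) = W(X₀) + ∫₀^t Φ_s^{-1} [V_α,W](X_s) (w^α)'(s) ds`, where
`[V,W](x) = DW(x)V(x) − DV(x)W(x)`. -/
theorem stmt19 (n d : ℕ) (T : ℝ) (hT : 0 ≤ T)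
    (V : Fin d → (Fin n → ℝ) → (Fin n → ℝ)) (hV : ∀ α, ContDiff ℝ 1 (V α))
    (W : (Fin n → ℝ) → (Fin n → ℝ)) (hW : ContDiff ℝ 1 W)
    (w : ℝ → Fin d → ℝ) (hw : ContDiff ℝ 1 w)
    (X : ℝ → (Fin n → ℝ))
    (hX : ∀ t, HasDerivAt X (∑ α, deriv w t α • V α (X t)) t)
    (Φ Ψ : ℝ → (Fin n → ℝ) →L[ℝ] (Fin n → ℝ))
    (hΦ : ∀ t, HasDerivAt Φ
      (∑ α, deriv w t α • ((fderiv ℝ (V α) (X t)).comp (Φ t))) t)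
    (hΦ0 : Φ 0 = ContinuousLinearMap.id ℝ (Fin n → ℝ))
    (hΨ : ∀ t, (Ψ t).comp (Φ t) = ContinuousLinearMap.id ℝ (Fin n → ℝ)
      ∧ (Φ t).comp (Ψ t) = ContinuousLinearMap.id ℝ (Fin n → ℝ)) :
    ∀ t ∈ Set.Icc (0 : ℝ) T,
      Ψ t (W (X t))
        = W (X 0) + ∫ s in (0 : ℝ)..t, ∑ α, deriv w s α •
            Ψ s (fderiv ℝ W (X s) (V α (X s)) - fderiv ℝ (V α) (X s) (W (X s))) := by
  -- units
  let u : ℝ → ((Fin n → ℝ) →L[ℝ] (Fin n → ℝ))ˣ :=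
    fun t => ⟨Φ t, Ψ t, (hΨ t).2, (hΨ t).1⟩
  have hΨu : ∀ t, Ψ t = Ring.inverse (Φ t) := fun t => by
    rw [show Φ t = (u t : (Fin n → ℝ) →L[ℝ] (Fin n → ℝ)) from rfl, Ring.inverse_unit]; rfl
  -- derivative of Ψ
  have hΨd : ∀ t, HasDerivAt Ψ
      (-(Ψ t * (∑ α, deriv w t α • ((fderiv ℝ (V α) (X t)).comp (Φ t))) * Ψ t)) t := by
    intro t
    have h1 := (hasFDerivAt_ringInverse (𝕜 := ℝ) (u t)).comp_hasDerivAt t (hΦ t)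
    have h2 : Ring.inverse ∘ Φ = Ψ := by
      funext s; exact (hΨu s).symm
    rw [h2] at h1
    have h3 : (((u t)⁻¹ : ((Fin n → ℝ) →L[ℝ] (Fin n → ℝ))ˣ) : (Fin n → ℝ) →L[ℝ] (Fin n → ℝ)) = Ψ t := rfl
    simpa [h3, ContinuousLinearMap.mulLeftRight_apply, Finset.mul_sum, Finset.sum_mul, mul_assoc, mul_smul_comm, smul_mul_assoc] using h1
  -- derivative of the pull-back
  set g : ℝ → (Fin n → ℝ) := fun s => ∑ α, deriv w s α •
      Ψ s (fderiv ℝ W (X s) (V α (X s)) - fderiv ℝ (V α) (X s) (W (X s))) with hg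
  have hF : ∀ t, HasDerivAt (fun s => Ψ s (W (X s))) (g t) t := by
    intro t
    have hWX : HasDerivAt (fun s => W (X s))
        (fderiv ℝ W (X t) (∑ α, deriv w t α • V α (X t))) t :=
      ((hW.differentiable one_ne_zero (X t)).hasFDerivAt).comp_hasDerivAt t (hX t)
    have h := (hΨd t).clm_apply hWX
    convert h using 1
    · rfl
    · rfl
    · rfl
    have hΦΨ : ∀ v, Φ t (Ψ t v) = v := fun v => by
      have := congrArg (fun L => L v) (hΨ t).2
      simpa using this
    simp only [hg, ContinuousLinearMap.neg_apply, ContinuousLinearMap.mul_apply,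
      ContinuousLinearMap.sum_apply, ContinuousLinearMap.smul_apply,
      ContinuousLinearMap.comp_apply, hΦΨ, map_sum, _root_.map_smul, map_sub, smul_sub]
    rw [Finset.sum_sub_distrib]
    abel
  -- continuity of the integrand
  have hΨc : Continuous Ψ := by
    exact continuous_iff_continuousAt.2 fun t => (hΨd t).continuousAt
  have hXc : Continuous X := continuous_iff_continuousAt.2 fun s => (hX s).continuousAt
  have hgc : Continuous g := by
    rw [hg]
    apply continuous_finset_sum
    intro α _
    have h1 : Continuous fun s => deriv w s α :=
      (continuous_apply α).comp (hw.continuous_deriv le_rfl)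
    have h2 : Continuous fun s =>
        fderiv ℝ W (X s) (V α (X s)) - fderiv ℝ (V α) (X s) (W (X s)) := by
      apply Continuous.sub
      · exact ((hW.continuous_fderiv one_ne_zero).comp hXc).clm_apply
          (((hV α).continuous).comp hXc)
      · exact (((hV α).continuous_fderiv one_ne_zero).comp hXc).clm_apply
          (hW.continuous.comp hXc)
    exact h1.smul (hΨc.clm_apply h2)
  -- FTC
  intro t ht
  have hint : ∫ s in (0:ℝ)..t, g s = Ψ t (W (X t)) - Ψ 0 (W (X 0)) :=
    intervalIntegral.integral_eq_sub_of_hasDerivAt (fun s _ => hF s)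
      (hgc.intervalIntegrable 0 t)
  have hΨ0 : Ψ 0 = ContinuousLinearMap.id ℝ (Fin n → ℝ) := by
    have := (hΨ 0).1
    rwa [hΦ0, ContinuousLinearMap.comp_id] at this
  rw [hint, hΨ0]
  simp
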